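/- Let u be a word of length at least 2 over a well-ordered alphabet, with Shirshov factorization u = u_L u_R (where u_R is the pseudo-lexicographically largest proper suffix of u). Then u is a Lyndon word if and only if u_L and u_R are both Lyndon words and u_L >_lex u_R. -/
import Mathlib

set_option linter.unusedSectionVars false

variable {X : Type*} [LinearOrder X] [WellFoundedLT X]

/-- The partial order `≺` on words: `u ≺ v` iff `u = r ++ x :: s`, `v = r ++ y :: t`
with letters `x < y`. -/
def Prec (u v : List X) : Prop :=
  ∃ (r s t : List X) (x y : X), x < y ∧ u = r ++ x :: s ∧ v = r ++ y :: t

/-- The pseudo-lexicographic order: `u <_lex v` iff `v` is a proper prefix of `u` or `u ≺ v`. -/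
def PLex (u v : List X) : Prop :=
  (v <+: u ∧ v ≠ u) ∨ Prec u v

/-- `u ≤_lex v`. -/
def PLexLe (u v : List X) : Prop := u = v ∨ PLex u v

/-- A Lyndon word (Kharchenko convention): a nonempty word strictly greater in the
pseudo-lexicographic order than each of its proper nonempty suffixes. -/
def IsLyndon (u : List X) : Prop :=
  u ≠ [] ∧ ∀ v w : List X, u = v ++ w → v ≠ [] → w ≠ [] → PLex w u


/-- The Shirshov factorization of `u`: `u = uL ++ uR` where `uR` is the
pseudo-lexicographically largest proper (nonempty) suffix of `u`. -/
def IsShirshov (u uL uR : List X) : Prop :=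
  u = uL ++ uR ∧ uL ≠ [] ∧ uR ≠ [] ∧
    ∀ w : List X, w <:+ u → w ≠ u → w ≠ [] → w = uR ∨ PLex w uR

namespace PLexAux

/-- The word `u` padded with `⊤` at infinity. -/
def g (u : List X) (i : ℕ) : WithTop X := u[i]?.elim ⊤ (fun x => (x : WithTop X))

lemma g_of_le {u : List X} {i : ℕ} (h : u.length ≤ i) : g u i = ⊤ := by
  simp [g, List.getElem?_eq_none h]

lemma g_of_lt {u : List X} {i : ℕ} (h : i < u.length) : g u i = (u[i] : X) := by
  simp [g, List.getElem?_eq_getElem h]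

lemma g_append_left {a b : List X} {i : ℕ} (h : i < a.length) : g (a ++ b) i = g a i := by
  simp [g, List.getElem?_append_left h]

lemma g_append_right (a b : List X) (i : ℕ) : g (a ++ b) (a.length + i) = g b i := by
  have : (a ++ b)[a.length + i]? = b[i]? := by
    rw [List.getElem?_append_right (by omega)]; simp
  simp [g, this]

lemma g_cons_zero (x : X) (u : List X) : g (x :: u) 0 = (x : WithTop X) := by simp [g]

lemma g_inj {u v : List X} {i : ℕ} (h : g u i = g v i) : u[i]? = v[i]? := by
  unfold g at h
  cases hu : u[i]? with
  | none => cases hv : v[i]? with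
    | none => rfl
    | some y => rw [hu, hv] at h; exact absurd h.symm (by simp)
  | some x => cases hv : v[i]? with
    | none => rw [hu, hv] at h; exact absurd h (by simp)
    | some y =>
        rw [hu, hv] at h; simp only [Option.elim] at h
        rw [WithTop.coe_injective h]

lemma ext_g {u v : List X} (h : ∀ i, g u i = g v i) : u = v :=
  List.ext_getElem? fun i => g_inj (h i)

/-- First-difference form of the pseudo-lexicographic order. -/
def PL (u v : List X) : Prop := ∃ k, (∀ i < k, g u i = g v i) ∧ g u k < g v k

lemma plex_iff {u v : List X} : PLex u v ↔ PL u v := by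
  constructor
  · rintro (⟨hpre, hne⟩ | ⟨r, s, t, x, y, hxy, hu, hv⟩)
    · obtain ⟨d, rfl⟩ := hpre
      have hd : d ≠ [] := by rintro rfl; simp at hne
      refine ⟨v.length, fun i hi => (g_append_left hi).symm ▸ rfl, ?_⟩
      · have h1 : g (v ++ d) v.length = g d 0 := by
          simpa using g_append_right v d 0
        have h2 : g v v.length = ⊤ := g_of_le le_rfl
        rw [h2, h1, g_of_lt (by cases d with | nil => exact absurd rfl hd | cons a l => simp)]
        exact WithTop.coe_lt_top _
    · refine ⟨r.length, fun i hi => ?_, ?_⟩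
      · rw [hu, hv, g_append_left hi, g_append_left hi]
      · have h1 : g u r.length = (x : WithTop X) := by
          rw [hu]
          have := g_append_right r (x :: s) 0
          rw [Nat.add_zero] at this
          rw [this, g_cons_zero]
        have h2 : g v r.length = (y : WithTop X) := by
          rw [hv]
          have := g_append_right r (y :: t) 0
          rw [Nat.add_zero] at this
          rw [this, g_cons_zero]
        rw [h1, h2]; exact_mod_cast hxy
  · rintro ⟨k, hagree, hlt⟩
    by_cases hk : v.length ≤ k
    · -- v is a proper prefix of u
      have hgv : g v k = ⊤ := g_of_le hk
      have hku : k < u.length := by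
        by_contra hc
        rw [g_of_le (by omega), hgv] at hlt
        exact lt_irrefl _ hlt
      left
      have hlen : v.length < u.length := lt_of_le_of_lt hk hku
      have hpre : v <+: u := by
        rw [List.prefix_iff_eq_take]
        apply List.ext_getElem (by simp [Nat.min_eq_left hlen.le])
        intro i h1 h2
        have hi : i < v.length := h1
        have h3 : v[i]? = u[i]? := (g_inj (hagree i (lt_of_lt_of_le hi hk))).symm
        rw [List.getElem?_eq_getElem hi, List.getElem?_eq_getElem (by omega)] at h3
        simpa [List.getElem_take] using Option.some_injective _ h3
      exact ⟨hpre, fun h => absurd (congrArg List.length h) (by omega)⟩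
    · push_neg at hk
      have hgv : g v k = (v[k] : X) := g_of_lt hk
      have hku : k < u.length := by
        by_contra hc
        rw [g_of_le (by omega), hgv] at hlt
        exact absurd hlt (by simp)
      have hgu : g u k = (u[k] : X) := g_of_lt hku
      rw [hgu, hgv] at hlt
      have hxy : u[k] < v[k] := by exact_mod_cast hlt
      right
      refine ⟨u.take k, u.drop (k+1), v.drop (k+1), u[k], v[k], hxy, ?_, ?_⟩
      · nth_rewrite 1 [← List.take_append_drop k u]
        rw [List.drop_eq_getElem_cons hku]
      · have htake : v.take k = u.take k := by
          apply List.ext_getElem (by simp; omega)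
          intro i h1 h2
          have hik : i < k := by simp at h1; omega
          have h3 : v[i]? = u[i]? := (g_inj (hagree i hik)).symm
          rw [List.getElem?_eq_getElem (by omega), List.getElem?_eq_getElem (by omega)] at h3
          simpa [List.getElem_take] using Option.some_injective _ h3
        nth_rewrite 1 [← List.take_append_drop k v]
        rw [List.drop_eq_getElem_cons hk, htake]

lemma plex_irrefl (u : List X) : ¬ PLex u u := by
  rw [plex_iff]
  rintro ⟨k, _, hlt⟩
  exact lt_irrefl _ hlt

lemma plex_trans {u v w : List X} (h1 : PLex u v) (h2 : PLex v w) : PLex u w := by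
  rw [plex_iff] at *
  obtain ⟨k1, ha1, hl1⟩ := h1
  obtain ⟨k2, ha2, hl2⟩ := h2
  rcases lt_trichotomy k1 k2 with h | h | h
  · exact ⟨k1, fun i hi => (ha1 i hi).trans (ha2 i (hi.trans h)),
      (ha2 k1 h) ▸ hl1⟩
  · subst h
    exact ⟨k1, fun i hi => (ha1 i hi).trans (ha2 i hi), hl1.trans hl2⟩
  · exact ⟨k2, fun i hi => (ha1 i (hi.trans h)).trans (ha2 i hi),
      (ha1 k2 h) ▸ hl2⟩

lemma plex_cancel {a b : List X} (c : List X) : PLex (c ++ a) (c ++ b) ↔ PLex a b := by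
  rw [plex_iff, plex_iff]
  constructor
  · rintro ⟨k, hagree, hlt⟩
    have hck : c.length ≤ k := by
      by_contra hc
      push_neg at hc
      rw [g_append_left hc, g_append_left hc] at hlt
      exact lt_irrefl _ hlt
    refine ⟨k - c.length, fun i hi => ?_, ?_⟩
    · have := hagree (c.length + i) (by omega)
      rwa [g_append_right, g_append_right] at this
    · have : c.length + (k - c.length) = k := by omega
      rw [← g_append_right c a, ← g_append_right c b, this]
      exact hlt
  · rintro ⟨k, hagree, hlt⟩
    refine ⟨c.length + k, fun i hi => ?_, ?_⟩
    · by_cases hic : i < c.length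
      · rw [g_append_left hic, g_append_left hic]
      · push_neg at hic
        have : i = c.length + (i - c.length) := by omega
        rw [this, g_append_right, g_append_right]
        exact hagree _ (by omega)
    · rw [g_append_right, g_append_right]; exact hlt

lemma prec_append {a b : List X} (c : List X) (h : Prec a b) : Prec a (b ++ c) := by
  obtain ⟨r, s, t, x, y, hxy, ha, hb⟩ := h
  exact ⟨r, s, t ++ c, x, y, hxy, ha, by rw [hb]; simp⟩

lemma eq_append_drop {l₁ l : List X} (h : l₁ <+: l) : l = l₁ ++ l.drop l₁.length := by
  obtain ⟨d, rfl⟩ := h; rw [List.drop_left]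

lemma head_of_append_cons {d e t : List X} {y : X} (h : d ++ e = y :: t) (hd : d ≠ []) :
    ∃ d', d = y :: d' := by
  cases d with
  | nil => exact absurd rfl hd
  | cons a l =>
    simp only [List.cons_append, List.cons.injEq] at h
    exact ⟨l, by rw [h.1]⟩

end PLexAux

open PLexAux in
/-- A word `u` of length `≥ 2` with Shirshov factorization
`u = uL ++ uR` is Lyndon iff `uL` and `uR` are both Lyndon and `uL >_lex uR`. -/
theorem isLyndon_iff_shirshov (u uL uR : List X) (hlen : 2 ≤ u.length)
    (hS : IsShirshov u uL uR) :
    IsLyndon u ↔ IsLyndon uL ∧ IsLyndon uR ∧ PLex uR uL := by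
  obtain ⟨rfl, hL0, hR0, hmax⟩ := hS
  have hLpos : 0 < uL.length := List.length_pos_iff.mpr hL0
  have hRpos : 0 < uR.length := List.length_pos_iff.mpr hR0
  constructor
  · intro hLy
    obtain ⟨-, hLy2⟩ := hLy
    have hRu : PLex uR (uL ++ uR) := hLy2 uL uR rfl hL0 hR0
    -- `uR` is Lyndon
    have hRlyn : IsLyndon uR := by
      refine ⟨hR0, fun v w hvw hv hw => ?_⟩
      have hvpos : 0 < v.length := List.length_pos_iff.mpr hv
      have hlvw := congrArg List.length hvw
      rw [List.length_append] at hlvw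
      have hsuf : w <:+ uL ++ uR := List.IsSuffix.trans ⟨v, hvw.symm⟩ (List.suffix_append uL uR)
      have hne1 : w ≠ uL ++ uR := fun h => by
        have := congrArg List.length h; rw [List.length_append] at this; omega
      rcases hmax w hsuf hne1 hw with h | h
      · exact absurd (congrArg List.length h) (by omega)
      · exact h
    -- `uR <_lex uL`
    have hRL : PLex uR uL := by
      rcases hRu with ⟨hpre, _⟩ | ⟨r, s, t, x, y, hxy, h1, h2⟩
      · exfalso
        have := hpre.length_le
        rw [List.length_append] at this
        omega
      · by_cases hr : r.length < uL.length
        · have hrL : r <+: uL :=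
            List.prefix_of_prefix_length_le ⟨y :: t, h2.symm⟩ (List.prefix_append uL uR) hr.le
          have huL := eq_append_drop hrL
          set d := uL.drop r.length with hd
          have hdne : d ≠ [] := fun h => by
            have := congrArg List.length huL
            rw [h, List.append_nil] at this; omega
          have h2' : d ++ uR = y :: t := by
            rw [huL, List.append_assoc] at h2
            exact List.append_cancel_left h2
          obtain ⟨d', hd'⟩ := head_of_append_cons h2' hdne
          exact Or.inr ⟨r, s, d', x, y, hxy, h1, by rw [huL, hd']⟩
        · push_neg at hr
          have hLr : uL <+: r :=
            List.prefix_of_prefix_length_le (List.prefix_append uL uR) ⟨y :: t, h2.symm⟩ hr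
          obtain ⟨r2, rfl⟩ := hLr
          rw [List.append_assoc] at h1
          refine Or.inl ⟨⟨r2 ++ x :: s, h1.symm⟩, fun h => ?_⟩
          have := congrArg List.length h1
          rw [← h, List.length_append, List.length_append, List.length_cons] at this
          omega
    -- `uL` is Lyndon
    have hLlyn : IsLyndon uL := by
      refine ⟨hL0, fun v w hvw hv hw => ?_⟩
      have hvpos : 0 < v.length := List.length_pos_iff.mpr hv
      have hwpos : 0 < w.length := List.length_pos_iff.mpr hw
      have hlvw := congrArg List.length hvw
      rw [List.length_append] at hlvw
      have hwlen : w.length < uL.length := by omega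
      have hsuf : w ++ uR <:+ uL ++ uR := ⟨v, by rw [hvw, List.append_assoc]⟩
      have hne1 : w ++ uR ≠ uL ++ uR := fun h => by
        have := congrArg List.length h
        rw [List.length_append, List.length_append] at this; omega
      have hwR : PLex (w ++ uR) uR := by
        rcases hmax (w ++ uR) hsuf hne1 (by simp [hw]) with h | h
        · exfalso
          have := congrArg List.length h
          rw [List.length_append] at this; omega
        · exact h
      have hwu : PLex (w ++ uR) (uL ++ uR) := plex_trans hwR hRu
      rcases hwu with ⟨hpre, _⟩ | ⟨r, s', t, x, y, hxy, h1, h2⟩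
      · exfalso
        have := hpre.length_le
        rw [List.length_append, List.length_append] at this
        omega
      · by_cases hr : r.length < w.length
        · have hrw : r <+: w :=
            List.prefix_of_prefix_length_le ⟨x :: s', h1.symm⟩ (List.prefix_append w uR) hr.le
          have hrL : r <+: uL :=
            List.prefix_of_prefix_length_le ⟨y :: t, h2.symm⟩ (List.prefix_append uL uR)
              (by omega)
          have hw1 := eq_append_drop hrw
          have hL1 := eq_append_drop hrL
          set d := w.drop r.length with hd
          set e := uL.drop r.length with he
          have hdne : d ≠ [] := fun h => by
            have := congrArg List.length hw1
            rw [h, List.append_nil] at this; omega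
          have hene : e ≠ [] := fun h => by
            have := congrArg List.length hL1
            rw [h, List.append_nil] at this; omega
          have h1' : d ++ uR = x :: s' := by
            rw [hw1, List.append_assoc] at h1; exact List.append_cancel_left h1
          have h2' : e ++ uR = y :: t := by
            rw [hL1, List.append_assoc] at h2; exact List.append_cancel_left h2
          obtain ⟨d', hd'⟩ := head_of_append_cons h1' hdne
          obtain ⟨e', he'⟩ := head_of_append_cons h2' hene
          exact Or.inr ⟨r, d', e', x, y, hxy, by rw [hw1, hd'], by rw [hL1, he']⟩
        · push_neg at hr
          have hwr : w <+: r := List.prefix_of_prefix_length_le (List.prefix_append w uR)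
              ⟨x :: s', h1.symm⟩ hr
          have hwuL : w <+: uL := List.prefix_of_prefix_length_le
              (hwr.trans ⟨y :: t, h2.symm⟩) (List.prefix_append uL uR) hwlen.le
          have hL1 := eq_append_drop hwuL
          set m := uL.drop w.length with hm
          have hmne : m ≠ [] := fun h => by
            have := congrArg List.length hL1
            rw [h, List.append_nil] at this; omega
          have hmpos : 0 < m.length := List.length_pos_iff.mpr hmne
          have hsuf2 : m ++ uR <:+ uL ++ uR := ⟨w, by rw [hL1, List.append_assoc]⟩
          have hne3 : m ++ uR ≠ uL ++ uR := fun h => by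
            have h4 := congrArg List.length h
            have h5 := congrArg List.length hL1
            rw [List.length_append, List.length_append] at h4
            rw [List.length_append] at h5
            omega
          have hmR : PLex (m ++ uR) uR := by
            rcases hmax (m ++ uR) hsuf2 hne3 (by simp [hmne]) with h | h
            · exfalso
              have := congrArg List.length h
              rw [List.length_append] at this; omega
            · exact h
          have hu_lt : PLex (uL ++ uR) (w ++ uR) := by
            rw [hL1, List.append_assoc]
            exact (plex_cancel w).mpr hmR
          exact absurd (plex_trans (plex_trans hu_lt hwR) hRu) (plex_irrefl _)
    exact ⟨hLlyn, hRlyn, hRL⟩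
  · rintro ⟨hLlyn, hRlyn, hRL⟩
    have key : PLex uR (uL ++ uR) := by
      rcases hRL with ⟨hpre, hne⟩ | hprec
      · have hR1 := eq_append_drop hpre
        set d := uR.drop uL.length with hd
        have hdne : d ≠ [] := fun h => by
          rw [h, List.append_nil] at hR1; exact hne hR1.symm
        have hdR : PLex d uR := hRlyn.2 uL d hR1 hL0 hdne
        have h2 := (plex_cancel uL).mpr hdR
        rw [← hR1] at h2
        exact h2
      · exact Or.inr (prec_append uR hprec)
    refine ⟨fun h => hL0 (List.append_eq_nil_iff.mp h).1, fun v w hvw hv hw => ?_⟩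
    have hvpos : 0 < v.length := List.length_pos_iff.mpr hv
    have hne1 : w ≠ uL ++ uR := fun h => by
      have h2 := congrArg List.length hvw
      rw [h, List.length_append, List.length_append, List.length_append] at h2
      omega
    rcases hmax w ⟨v, hvw.symm⟩ hne1 hw with h | h
    · rw [h]; exact key
    · exact plex_trans h key
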